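/- For a qubit with PVMs Z = {|0⟩⟨0|, |1⟩⟨1|} and X = {|x̄⟩⟨x̄|}_{x∈{0,1}} (the conjugate basis), every density operator ρ satisfies max_z tr(ρ Z_z) + max_x tr(ρ X_x) ≤ 1 + 1/√2. -/
import Mathlib


open scoped ComplexOrder

/-- Operator norm of a matrix, viewed as an operator on Euclidean space. -/
noncomputable def opNorm {N : ℕ} (A : Matrix (Fin N) (Fin N) ℂ) : ℝ :=
  ‖Matrix.toEuclideanCLM (𝕜 := ℂ) A‖

/-- An orthogonal projection. -/
def IsProjection {N : ℕ} (A : Matrix (Fin N) (Fin N) ℂ) : Prop :=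
  A.IsHermitian ∧ A * A = A

/-- A density operator: positive semidefinite with trace one. -/
def IsDensity {N : ℕ} (ρ : Matrix (Fin N) (Fin N) ℂ) : Prop :=
  ρ.PosSemidef ∧ ρ.trace = 1

/-- The computational-basis PVM Z on a qubit: Z_0 = |0⟩⟨0|, Z_1 = |1⟩⟨1|. -/
def qubitZ : Fin 2 → Matrix (Fin 2) (Fin 2) ℂ :=
  fun z => !![if z = 0 then 1 else 0, 0; 0, if z = 1 then 1 else 0]

/-- The conjugate-basis PVM X on a qubit: X_x = |x̄⟩⟨x̄| with
    |0̄⟩ = (|0⟩+|1⟩)/√2, |1̄⟩ = (|0⟩−|1⟩)/√2. -/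
noncomputable def qubitX : Fin 2 → Matrix (Fin 2) (Fin 2) ℂ :=
  fun x => !![1/2, if x = 0 then 1/2 else -(1/2);
              if x = 0 then 1/2 else -(1/2), 1/2]

lemma lp_aux (x y c : ℝ) (hx : 0 ≤ x) (hy : 0 ≤ y) (h : x^2 + y^2 ≤ 1/4)
    (hc : 0 < c) (hc2 : c^2 = 2) : x + y ≤ c/2 := by
  have h3 : (x+y)^2 ≤ (c/2)^2 := by nlinarith [sq_nonneg (x-y)]
  nlinarith [h3]

lemma lp_real (a d r s c : ℝ) (htr : a + d = 1) (hkey : r^2 + s^2 ≤ a*d)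
    (hc : 0 < c) (hc2 : c^2 = 2) :
    max a d + max (1/2 + r) (1/2 - r) ≤ 1 + c/2 := by
  rcases max_cases a d with ⟨h1, h1'⟩ | ⟨h1, h1'⟩ <;> rw [h1] <;>
    rcases max_cases ((1:ℝ)/2 + r) ((1:ℝ)/2 - r) with ⟨h2, h2'⟩ | ⟨h2, h2'⟩ <;> rw [h2]
  · linarith [lp_aux (a-1/2) r c (by linarith) (by linarith) (by nlinarith [sq_nonneg s]) hc hc2]
  · linarith [lp_aux (a-1/2) (-r) c (by linarith) (by linarith) (by nlinarith [sq_nonneg s]) hc hc2]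
  · linarith [lp_aux (d-1/2) r c (by linarith) (by linarith) (by nlinarith [sq_nonneg s]) hc hc2]
  · linarith [lp_aux (d-1/2) (-r) c (by linarith) (by linarith) (by nlinarith [sq_nonneg s]) hc hc2]

/-- Landau–Pollak relation for a qubit:
    max_z tr(ρZ_z) + max_x tr(ρX_x) ≤ 1 + 1/√2. -/
theorem qubit_landau_pollak (ρ : Matrix (Fin 2) (Fin 2) ℂ) (hρ : IsDensity ρ) :
    max ((ρ * qubitZ 0).trace).re ((ρ * qubitZ 1).trace).re +
      max ((ρ * qubitX 0).trace).re ((ρ * qubitX 1).trace).re ≤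
      1 + 1 / Real.sqrt 2 := by
  obtain ⟨hpsd, htr⟩ := hρ
  have hH : ρ.IsHermitian := hpsd.1
  have h10 : ρ 1 0 = star (ρ 0 1) := (hH.apply 1 0).symm
  have h00im : (ρ 0 0).im = 0 := by
    have := congrArg Complex.im (hH.apply 0 0).symm
    simp [Complex.star_def] at this; linarith
  have h11im : (ρ 1 1).im = 0 := by
    have := congrArg Complex.im (hH.apply 1 1).symm
    simp [Complex.star_def] at this; linarith
  set a := (ρ 0 0).re with ha
  set d := (ρ 1 1).re with hd
  set r := (ρ 0 1).re with hr
  set s := (ρ 0 1).im with hs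
  have htr' : a + d = 1 := by
    have := congrArg Complex.re htr
    rw [Matrix.trace_fin_two] at this; simpa using this
  have hdet : 0 ≤ (ρ.det).re := by
    have h : ρ.det = ((∏ i, hpsd.1.eigenvalues i : ℝ) : ℂ) := by
      rw [hpsd.1.det_eq_prod_eigenvalues]; norm_cast
    rw [h, Complex.ofReal_re]
    exact Finset.prod_nonneg fun i _ => hpsd.eigenvalues_nonneg i
  have hkey : r ^ 2 + s ^ 2 ≤ a * d := by
    have hdet' : (ρ.det).re = a * d - (r ^ 2 + s ^ 2) := by
      rw [Matrix.det_fin_two, h10]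
      simp [Complex.sub_re, Complex.mul_re, h00im, h11im, Complex.star_def, ha, hd, hr, hs]
      ring
    linarith [hdet, hdet'.le, hdet'.ge]
  have hz0 : ((ρ * qubitZ 0).trace).re = a := by
    simp [qubitZ, Matrix.trace_fin_two, Matrix.mul_apply, Fin.sum_univ_two, ha]
  have hz1 : ((ρ * qubitZ 1).trace).re = d := by
    simp [qubitZ, Matrix.trace_fin_two, Matrix.mul_apply, Fin.sum_univ_two, hd]
  have hx0 : ((ρ * qubitX 0).trace).re = 1 / 2 + r := by
    rw [Matrix.trace_fin_two]
    have : (ρ * qubitX 0) 0 0 + (ρ * qubitX 0) 1 1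
        = (ρ 0 0 + ρ 1 1) / 2 + (ρ 0 1 + ρ 1 0) / 2 := by
      simp [qubitX, Matrix.mul_apply, Fin.sum_univ_two]; ring
    rw [this, h10]
    simp [Complex.add_re, Complex.div_re, Complex.star_def, ha, hd, hr, hs]
    rw [show (ρ 0 0).re + (ρ 1 1).re = a + d from rfl, htr']
    ring
  have hx1 : ((ρ * qubitX 1).trace).re = 1 / 2 - r := by
    rw [Matrix.trace_fin_two]
    have : (ρ * qubitX 1) 0 0 + (ρ * qubitX 1) 1 1
        = (ρ 0 0 + ρ 1 1) / 2 - (ρ 0 1 + ρ 1 0) / 2 := by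
      simp [qubitX, Matrix.mul_apply, Fin.sum_univ_two]; ring
    rw [this, h10]
    simp [Complex.sub_re, Complex.add_re, Complex.div_re, Complex.star_def, ha, hd, hr, hs]
    rw [show (ρ 0 0).re + (ρ 1 1).re = a + d from rfl, htr']
    ring
  rw [hz0, hz1, hx0, hx1]
  have hc : (0:ℝ) < Real.sqrt 2 := by positivity
  have hc2 : Real.sqrt 2 ^ 2 = 2 := Real.sq_sqrt (by norm_num)
  have h1c : 1 / Real.sqrt 2 = Real.sqrt 2 / 2 := by
    rw [div_eq_div_iff hc.ne' (two_ne_zero)]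
    nlinarith
  rw [h1c]
  exact lp_real a d r s _ htr' hkey hc hc2
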